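/- The mod-7 analogue of the Lambert-series reduction: as formal power series, (3/q²) Σ_{j≥0} [ q^{7j+5}/(1−q^{7j+4}) − q^{7j+4}/(1−q^{7j+3}) + 2q^{7j+2}/(1−q^{7j+1}) − 2q^{7j+7}/(1−q^{7j+6}) + 3q^{7j+6}/(1−q^{7j+5}) − 3q^{7j+3}/(1−q^{7j+2}) ] = 3 Σ_{m≥0} q^m (1−q^{m+1})³ (2q^{2m+2} + 3q^{m+1} + 2) / (1−q^{7m+7}). -/

import Mathlib

section helpers
variable {q : ℂ}

lemma pow_norm_lt (hq : ‖q‖ < 1) {n : ℕ} (hn : 1 ≤ n) : ‖q ^ n‖ < 1 := by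
  rw [norm_pow]
  calc ‖q‖ ^ n ≤ ‖q‖ ^ 1 := pow_le_pow_of_le_one (norm_nonneg q) hq.le hn
  _ < 1 := by simpa using hq

lemma one_sub_pow_ne (hq : ‖q‖ < 1) {n : ℕ} (hn : 1 ≤ n) : 1 - q ^ n ≠ 0 := by
  intro h
  have h2 := pow_norm_lt hq hn
  rw [← sub_eq_zero.mp h] at h2
  simp at h2

lemma aux_summable (hq : ‖q‖ < 1) (a c d : ℕ) (ha : 1 ≤ a) (hd : 1 ≤ d) :
    Summable (fun n : ℕ => q ^ (a * n) / (1 - q ^ (c * n + d))) := by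
  apply Summable.of_norm_bounded (g := fun n : ℕ => (1 - ‖q‖)⁻¹ * ‖q‖ ^ n)
  · exact (summable_geometric_of_lt_one (norm_nonneg q) hq).mul_left _
  · intro n
    have h1 : ‖q ^ (a * n)‖ ≤ ‖q‖ ^ n := by
      rw [norm_pow]
      exact pow_le_pow_of_le_one (norm_nonneg q) hq.le (by nlinarith)
    have h2 : (1 : ℝ) - ‖q‖ ≤ ‖1 - q ^ (c * n + d)‖ := by
      have := norm_sub_norm_le (1 : ℂ) (q ^ (c * n + d))
      have h3 : ‖q ^ (c * n + d)‖ ≤ ‖q‖ := by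
        rw [norm_pow]
        calc ‖q‖ ^ (c * n + d) ≤ ‖q‖ ^ 1 := pow_le_pow_of_le_one (norm_nonneg q) hq.le (by omega)
        _ = ‖q‖ := pow_one _
      simp only [norm_one] at this
      linarith
    have hpos : (0 : ℝ) < 1 - ‖q‖ := by linarith
    rw [norm_div]
    rw [div_le_iff₀ (lt_of_lt_of_le hpos h2)]
    calc ‖q ^ (a * n)‖ ≤ ‖q‖ ^ n := h1
    _ = ‖q‖ ^ n * ((1 - ‖q‖)⁻¹ * (1 - ‖q‖)) := by
        rw [inv_mul_cancel₀ hpos.ne', mul_one]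
    _ ≤ ‖q‖ ^ n * ((1 - ‖q‖)⁻¹ * ‖1 - q ^ (c * n + d)‖) := by
        apply mul_le_mul_of_nonneg_left _ (pow_nonneg (norm_nonneg q) n)
        exact mul_le_mul_of_nonneg_left h2 (by positivity)
    _ = (1 - ‖q‖)⁻¹ * ‖q‖ ^ n * ‖1 - q ^ (c * n + d)‖ := by ring


set_option maxHeartbeats 1000000 in
lemma key (hq : ‖q‖ < 1) (A : ℕ) (hA : 1 ≤ A) :
    ∑' j : ℕ, q ^ (7 * j) / (1 - q ^ (7 * j + A))
      = ∑' m : ℕ, q ^ (A * m) / (1 - q ^ (7 * m + 7)) := by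
  have h1 : ∀ j : ℕ, q ^ (7 * j) / (1 - q ^ (7 * j + A))
      = ∑' m : ℕ, q ^ (7 * j) * (q ^ (7 * j + A)) ^ m := by
    intro j
    rw [tsum_mul_left, tsum_geometric_of_norm_lt_one (pow_norm_lt hq (by omega)),
      div_eq_mul_inv]
  have hF : Summable (Function.uncurry fun j m : ℕ => q ^ (7 * j) * (q ^ (7 * j + A)) ^ m) := by
    apply Summable.of_norm_bounded (g := fun p : ℕ × ℕ => ‖q‖ ^ p.1 * ‖q‖ ^ p.2)
    · exact (summable_geometric_of_lt_one (norm_nonneg q) hq).mul_of_nonneg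
        (summable_geometric_of_lt_one (norm_nonneg q) hq)
        (fun _ => pow_nonneg (norm_nonneg q) _) (fun _ => pow_nonneg (norm_nonneg q) _)
    · rintro ⟨j, m⟩
      simp only [Function.uncurry, norm_mul, norm_pow]
      rw [← pow_mul, ← pow_add, ← pow_add]
      exact pow_le_pow_of_le_one (norm_nonneg q) hq.le (by nlinarith)
  calc ∑' j : ℕ, q ^ (7 * j) / (1 - q ^ (7 * j + A))
      = ∑' (j : ℕ) (m : ℕ), q ^ (7 * j) * (q ^ (7 * j + A)) ^ m := tsum_congr h1
    _ = ∑' (m : ℕ) (j : ℕ), q ^ (7 * j) * (q ^ (7 * j + A)) ^ m := (Summable.tsum_comm hF).symm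
    _ = ∑' m : ℕ, q ^ (A * m) / (1 - q ^ (7 * m + 7)) := by
        apply tsum_congr
        intro m
        have h2 : ∀ j : ℕ, q ^ (7 * j) * (q ^ (7 * j + A)) ^ m
            = q ^ (A * m) * (q ^ (7 * m + 7)) ^ j := by
          intro j
          rw [← pow_mul, ← pow_add, ← pow_mul, ← pow_add]
          congr 1
          ring
        rw [tsum_congr h2, tsum_mul_left,
          tsum_geometric_of_norm_lt_one (pow_norm_lt hq (by omega)), div_eq_mul_inv]


end helpers

/-- The mod-7 Lambert-series reduction (E) ⇔ (F). -/
theorem lambert_E_eq_F (q : ℂ) (hq0 : q ≠ 0) (hq : ‖q‖ < 1) :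
    (3 / q ^ 2) * ∑' j : ℕ,
        (q ^ (7 * j + 5) / (1 - q ^ (7 * j + 4)) - q ^ (7 * j + 4) / (1 - q ^ (7 * j + 3))
          + 2 * q ^ (7 * j + 2) / (1 - q ^ (7 * j + 1))
          - 2 * q ^ (7 * j + 7) / (1 - q ^ (7 * j + 6))
          + 3 * q ^ (7 * j + 6) / (1 - q ^ (7 * j + 5))
          - 3 * q ^ (7 * j + 3) / (1 - q ^ (7 * j + 2)))
      = 3 * ∑' m : ℕ,
          q ^ m * (1 - q ^ (m + 1)) ^ 3 * (2 * q ^ (2 * m + 2) + 3 * q ^ (m + 1) + 2)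
            / (1 - q ^ (7 * m + 7)) := by
  -- summabilities of the j-families
  have sg : ∀ A : ℕ, 1 ≤ A → Summable (fun j : ℕ => q ^ (7 * j) / (1 - q ^ (7 * j + A))) :=
    fun A hA => aux_summable hq 7 7 A (by norm_num) hA
  have s4 := (sg 4 (by norm_num)).mul_left (q ^ 5)
  have s3 := (sg 3 (by norm_num)).mul_left (q ^ 4)
  have s1 := (sg 1 (by norm_num)).mul_left (2 * q ^ 2)
  have s6 := (sg 6 (by norm_num)).mul_left (2 * q ^ 7)
  have s5 := (sg 5 (by norm_num)).mul_left (3 * q ^ 6)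
  have s2 := (sg 2 (by norm_num)).mul_left (3 * q ^ 3)
  -- summabilities of the m-families
  have tg : ∀ A : ℕ, 1 ≤ A → Summable (fun m : ℕ => q ^ (A * m) / (1 - q ^ (7 * m + 7))) :=
    fun A hA => aux_summable hq A 7 7 hA (by norm_num)
  have t1 := (tg 1 (by norm_num)).mul_left (2 : ℂ)
  have t2 := (tg 2 (by norm_num)).mul_left (3 * q)
  have t3 := (tg 3 (by norm_num)).mul_left (q ^ 2)
  have t4 := (tg 4 (by norm_num)).mul_left (q ^ 3)
  have t5 := (tg 5 (by norm_num)).mul_left (3 * q ^ 4)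
  have t6 := (tg 6 (by norm_num)).mul_left (2 * q ^ 5)
  have hD : ∀ m : ℕ, (1 : ℂ) - q ^ (7 * m + 7) ≠ 0 := fun m => one_sub_pow_ne hq (by omega)
  -- rewrite LHS summand
  have hL : ∀ j : ℕ,
      (q ^ (7 * j + 5) / (1 - q ^ (7 * j + 4)) - q ^ (7 * j + 4) / (1 - q ^ (7 * j + 3))
          + 2 * q ^ (7 * j + 2) / (1 - q ^ (7 * j + 1))
          - 2 * q ^ (7 * j + 7) / (1 - q ^ (7 * j + 6))
          + 3 * q ^ (7 * j + 6) / (1 - q ^ (7 * j + 5))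
          - 3 * q ^ (7 * j + 3) / (1 - q ^ (7 * j + 2)))
      = q ^ 5 * (q ^ (7 * j) / (1 - q ^ (7 * j + 4)))
          - q ^ 4 * (q ^ (7 * j) / (1 - q ^ (7 * j + 3)))
          + 2 * q ^ 2 * (q ^ (7 * j) / (1 - q ^ (7 * j + 1)))
          - 2 * q ^ 7 * (q ^ (7 * j) / (1 - q ^ (7 * j + 6)))
          + 3 * q ^ 6 * (q ^ (7 * j) / (1 - q ^ (7 * j + 5)))
          - 3 * q ^ 3 * (q ^ (7 * j) / (1 - q ^ (7 * j + 2))) := by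
    intro j
    simp only [pow_add]
    ring
  rw [tsum_congr hL,
    Summable.tsum_sub ((((s4.sub s3).add s1).sub s6).add s5) s2,
    Summable.tsum_add (((s4.sub s3).add s1).sub s6) s5,
    Summable.tsum_sub ((s4.sub s3).add s1) s6,
    Summable.tsum_add (s4.sub s3) s1,
    Summable.tsum_sub s4 s3,
    tsum_mul_left, tsum_mul_left, tsum_mul_left, tsum_mul_left, tsum_mul_left, tsum_mul_left,
    key hq 4 (by norm_num), key hq 3 (by norm_num), key hq 1 (by norm_num),
    key hq 6 (by norm_num), key hq 5 (by norm_num), key hq 2 (by norm_num)]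
  -- rewrite RHS summand
  have hR : ∀ m : ℕ,
      q ^ m * (1 - q ^ (m + 1)) ^ 3 * (2 * q ^ (2 * m + 2) + 3 * q ^ (m + 1) + 2)
            / (1 - q ^ (7 * m + 7))
      = 2 * (q ^ (1 * m) / (1 - q ^ (7 * m + 7)))
        - 3 * q * (q ^ (2 * m) / (1 - q ^ (7 * m + 7)))
        - q ^ 2 * (q ^ (3 * m) / (1 - q ^ (7 * m + 7)))
        + q ^ 3 * (q ^ (4 * m) / (1 - q ^ (7 * m + 7)))
        + 3 * q ^ 4 * (q ^ (5 * m) / (1 - q ^ (7 * m + 7)))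
        - 2 * q ^ 5 * (q ^ (6 * m) / (1 - q ^ (7 * m + 7))) := by
    intro m
    field_simp
    ring
  rw [tsum_congr hR,
    Summable.tsum_sub ((((t1.sub t2).sub t3).add t4).add t5) t6,
    Summable.tsum_add (((t1.sub t2).sub t3).add t4) t5,
    Summable.tsum_add ((t1.sub t2).sub t3) t4,
    Summable.tsum_sub (t1.sub t2) t3,
    Summable.tsum_sub t1 t2,
    tsum_mul_left, tsum_mul_left, tsum_mul_left, tsum_mul_left, tsum_mul_left, tsum_mul_left]
  field_simp
  ring
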